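/- arXiv:2301.09500 — 3 statements merged into one kernel-verified Lean document; each statement's English description precedes it below -/
import Mathlib

section
/- Let W be a d × d real symmetric matrix with spectral decomposition W = Σ_{j=1}^d w_j u_j u_jᵀ, where u_1, …, u_d are orthonormal eigenvectors and w_1, …, w_d the corresponding eigenvalues, and let K be an integer with 1 ≤ K ≤ d. Define γ* = inf{γ ≥ 0 : Σ_{j=1}^d min{1, max(w_j − γ, 0)} ≤ K} and H* = Σ_{j=1}^d min{1, max(w_j − γ*, 0)} u_j u_jᵀ. Then H* is positive semi-definite, all eigenvalues of H* lie in [0, 1] (so ‖H*‖₂ ≤ 1), tr(H*) ≤ K (so ‖H*‖_* ≤ K), and for every d × d real positive semi-definite matrix H satisfying H ⪯ I_d and tr(H) ≤ K one has ‖H* − W‖_F ≤ ‖H − W‖_F; that is, H* minimizes ‖H − W‖_F² over the set {H positive semi-definite : ‖H‖_* ≤ K, ‖H‖₂ ≤ 1}. -/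
open Matrix BigOperators

/-- Squared Frobenius norm of a real matrix. -/
noncomputable def frobNorm {d : ℕ} (M : Matrix (Fin d) (Fin d) ℝ) : ℝ :=
  Real.sqrt (∑ a, ∑ b, (M a b) ^ 2)

section aux

lemma fantope_diag_nonneg {d : ℕ} {M : Matrix (Fin d) (Fin d) ℝ} (hM : M.PosSemidef)
    (a : Fin d) : 0 ≤ M a a := by
  have := hM.diag_nonneg (i := a)
  simpa [dotProduct, Matrix.mulVec, Pi.single_apply] using this

lemma fantope_fsq_trace {d : ℕ} (M : Matrix (Fin d) (Fin d) ℝ) :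
    ∑ a, ∑ b, (M a b) ^ 2 = (Mᴴ * M).trace := by
  simp [Matrix.trace, Matrix.mul_apply, Matrix.diag, sq]
  rw [Finset.sum_comm]

lemma fantope_fsq_diagonal {d : ℕ} (c : Fin d → ℝ) :
    ∑ a, ∑ b, ((Matrix.diagonal c) a b) ^ 2 = ∑ a, (c a) ^ 2 := by
  simp [Matrix.diagonal_apply, ite_pow]

lemma fantope_decomp {d : ℕ} (c : Fin d → ℝ) (u : Fin d → Fin d → ℝ) :
    ∑ j, c j • Matrix.vecMulVec (u j) (u j)
      = (Matrix.of u)ᴴ * Matrix.diagonal c * Matrix.of u := by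
  ext a b
  simp only [Matrix.sum_apply, Matrix.smul_apply, Matrix.vecMulVec_apply, smul_eq_mul,
    Matrix.mul_apply, Matrix.diagonal_apply, Matrix.conjTranspose_apply, Matrix.of_apply,
    star_trivial, mul_ite, mul_zero, ite_mul, zero_mul, Finset.sum_ite_eq, Finset.sum_ite_eq',
    Finset.mem_univ, if_true]
  exact Finset.sum_congr rfl fun k _ => by ring

lemma fantope_fsq_conj {d : ℕ} (U M : Matrix (Fin d) (Fin d) ℝ) (h1 : U * Uᴴ = 1) :
    ∑ a, ∑ b, ((Uᴴ * M * U) a b) ^ 2 = ∑ a, ∑ b, (M a b) ^ 2 := by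
  rw [fantope_fsq_trace, fantope_fsq_trace]
  have hT : (Uᴴ * M * U)ᴴ = Uᴴ * Mᴴ * U := by
    simp [Matrix.conjTranspose_mul, Matrix.mul_assoc]
  rw [hT]
  have hcollapse : Uᴴ * Mᴴ * U * (Uᴴ * M * U) = Uᴴ * (Mᴴ * M) * U := by
    calc Uᴴ * Mᴴ * U * (Uᴴ * M * U)
        = Uᴴ * (Mᴴ * (U * (Uᴴ * (M * U)))) := by simp only [Matrix.mul_assoc]
      _ = Uᴴ * (Mᴴ * (U * Uᴴ * (M * U))) := by simp only [Matrix.mul_assoc]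
      _ = Uᴴ * (Mᴴ * (M * U)) := by rw [h1, one_mul]
      _ = Uᴴ * (Mᴴ * M) * U := by simp only [Matrix.mul_assoc]
  rw [hcollapse, Matrix.trace_mul_cycle, h1, one_mul]

/-- 1-Lipschitz bound for the clamp function. -/
lemma fantope_clamp_lip (a ε : ℝ) (hε : 0 ≤ ε) :
    min 1 (max (a + ε) 0) ≤ min 1 (max a 0) + ε := by
  rcases le_total 1 (max a 0) with hc | hc
  · rw [min_eq_left hc]
    calc min 1 (max (a + ε) 0) ≤ 1 := min_le_left _ _
      _ ≤ 1 + ε := by linarith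
  · rw [min_eq_right hc]
    have h1 : max (a + ε) 0 ≤ max a 0 + ε :=
      max_le (by linarith [le_max_left a 0]) (by positivity)
    calc min 1 (max (a + ε) 0) ≤ max (a + ε) 0 := min_le_right _ _
      _ ≤ max a 0 + ε := h1

/-- the scalar (vector) minimization lemma. -/
lemma fantope_vec {d : ℕ} (K : ℝ) (w : Fin d → ℝ) (γ : ℝ) (hγ0 : 0 ≤ γ)
    (hcomp : 0 < γ → ∑ j, min 1 (max (w j - γ) 0) = K)
    (lam : Fin d → ℝ) (hl0 : ∀ i, 0 ≤ lam i) (hl1 : ∀ i, lam i ≤ 1)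
    (hlK : ∑ i, lam i ≤ K) :
    ∑ i, (min 1 (max (w i - γ) 0) - w i) ^ 2 ≤ ∑ i, (lam i - w i) ^ 2 := by
  set h : Fin d → ℝ := fun i => min 1 (max (w i - γ) 0) with hh
  have key : ∀ i, -γ * (lam i - h i) ≤ (h i - w i) * (lam i - h i) := by
    intro i
    rcases le_total (w i - γ) 0 with hc | hc
    · have hhi : h i = 0 := by simp [hh, max_eq_right hc]
      rw [hhi]
      have : w i ≤ γ := by linarith
      nlinarith [hl0 i]
    · rcases le_total 1 (w i - γ) with hc1 | hc1
      · have hhi : h i = 1 := by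
          simp [hh, min_eq_left, le_max_of_le_left hc1]
        rw [hhi]
        nlinarith [hl1 i]
      · have hhi : h i = w i - γ := by
          rw [hh]; simp only []
          rw [max_eq_left hc, min_eq_right hc1]
        rw [hhi]
        nlinarith
  have hsum : -γ * (∑ i, lam i - ∑ i, h i) ≤ ∑ i, (h i - w i) * (lam i - h i) := by
    have : ∑ i, (-γ * (lam i - h i)) ≤ ∑ i, (h i - w i) * (lam i - h i) :=
      Finset.sum_le_sum fun i _ => key i
    calc -γ * (∑ i, lam i - ∑ i, h i) = ∑ i, (-γ * (lam i - h i)) := by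
          rw [← Finset.sum_sub_distrib, Finset.mul_sum]
      _ ≤ _ := this
  have hslack : 0 ≤ -γ * (∑ i, lam i - ∑ i, h i) := by
    rcases eq_or_lt_of_le hγ0 with hγe | hγp
    · rw [← hγe]; simp
    · have hK : ∑ i, h i = K := hcomp hγp
      have : ∑ i, lam i - ∑ i, h i ≤ 0 := by rw [hK]; linarith
      nlinarith
  have expand : ∑ i, (lam i - w i) ^ 2
      = ∑ i, (h i - w i) ^ 2 + ∑ i, (lam i - h i) ^ 2
        + 2 * ∑ i, (h i - w i) * (lam i - h i) := by
    rw [Finset.mul_sum, ← Finset.sum_add_distrib, ← Finset.sum_add_distrib]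
    exact Finset.sum_congr rfl fun i _ => by ring
  have hsq : 0 ≤ ∑ i, (lam i - h i) ^ 2 :=
    Finset.sum_nonneg fun i _ => sq_nonneg _
  linarith [hsum, hslack, hsq, expand.ge, expand.le]

end aux

/-- Proposition 1: the Fantope projection.  Given a symmetric matrix `W` with spectral
decomposition `W = ∑ j w_j u_j u_jᵀ`, the matrix `H* = ∑ j min(1, max(w_j − γ*, 0)) u_j u_jᵀ`,
where `γ* = inf{γ ≥ 0 : ∑ j min(1, max(w_j − γ, 0)) ≤ K}`, is positive semi-definite with
eigenvalues in `[0,1]` and trace at most `K`, and minimizes `‖H − W‖_F` over all positive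
semi-definite `H` with `H ⪯ I` and `tr(H) ≤ K`. -/
theorem fantope_projection (d K : ℕ) (hK1 : 1 ≤ K) (hKd : K ≤ d)
    (W : Matrix (Fin d) (Fin d) ℝ) (w : Fin d → ℝ) (u : Fin d → Fin d → ℝ)
    (horth : ∀ i j, dotProduct (u i) (u j) = if i = j then (1 : ℝ) else 0)
    (hW : W = ∑ j, w j • Matrix.vecMulVec (u j) (u j))
    (γstar : ℝ)
    (hγ : γstar = sInf {γ : ℝ | 0 ≤ γ ∧ ∑ j, min 1 (max (w j - γ) 0) ≤ (K : ℝ)})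
    (Hstar : Matrix (Fin d) (Fin d) ℝ)
    (hH : Hstar = ∑ j, (min 1 (max (w j - γstar) 0)) • Matrix.vecMulVec (u j) (u j)) :
    Hstar.PosSemidef ∧ (1 - Hstar).PosSemidef ∧ Hstar.trace ≤ (K : ℝ) ∧
      ∀ H : Matrix (Fin d) (Fin d) ℝ, H.PosSemidef → (1 - H).PosSemidef →
        H.trace ≤ (K : ℝ) → frobNorm (Hstar - W) ≤ frobNorm (H - W) := by
  -- basic notation
  set f : ℝ → ℝ := fun γ => ∑ j, min 1 (max (w j - γ) 0) with hf
  set S : Set ℝ := {γ : ℝ | 0 ≤ γ ∧ f γ ≤ (K : ℝ)} with hS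
  set h : Fin d → ℝ := fun j => min 1 (max (w j - γstar) 0) with hhdef
  set U : Matrix (Fin d) (Fin d) ℝ := Matrix.of u with hU
  -- properties of gamma star
  have hcont : Continuous f := by
    apply continuous_finset_sum
    intro j _
    exact (continuous_const.min ((continuous_const.sub continuous_id).max continuous_const))
  have hSclosed : IsClosed S := by
    have : S = {γ : ℝ | 0 ≤ γ} ∩ f ⁻¹' (Set.Iic (K : ℝ)) := rfl
    rw [this]
    exact (isClosed_le continuous_const continuous_id).inter (isClosed_Iic.preimage hcont)
  have hSne : S.Nonempty := by
    refine ⟨∑ j, |w j|, Finset.sum_nonneg fun j _ => abs_nonneg _, ?_⟩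
    have : ∀ j, min 1 (max (w j - ∑ i, |w i|) 0) = 0 := by
      intro j
      have hle : w j ≤ ∑ i, |w i| := by
        calc w j ≤ |w j| := le_abs_self _
          _ ≤ ∑ i, |w i| := Finset.single_le_sum (fun i _ => abs_nonneg (w i)) (Finset.mem_univ j)
      rw [max_eq_right (by linarith), min_eq_right (by norm_num)]
    simp only [hf]
    rw [Finset.sum_congr rfl fun j _ => this j]
    simp
  have hSbdd : BddBelow S := ⟨0, fun x hx => hx.1⟩
  have hγmem : γstar ∈ S := by
    rw [hγ]; exact hSclosed.csInf_mem hSne hSbdd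
  have hγ0 : 0 ≤ γstar := hγmem.1
  have hfeas : f γstar ≤ (K : ℝ) := hγmem.2
  -- complementary slackness
  have hcomp : 0 < γstar → f γstar = (K : ℝ) := by
    intro hγp
    by_contra hne
    have hlt : f γstar < (K : ℝ) := lt_of_le_of_ne hfeas hne
    have hd0 : (0 : ℝ) < d := by exact_mod_cast lt_of_lt_of_le hK1 hKd
    set ε : ℝ := min γstar (((K : ℝ) - f γstar) / d) with hε
    have hεpos : 0 < ε := lt_min hγp (div_pos (by linarith) hd0)
    have hεγ : ε ≤ γstar := min_le_left _ _
    have hεd : ε ≤ ((K : ℝ) - f γstar) / d := min_le_right _ _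
    have hmem : γstar - ε ∈ S := by
      constructor
      · linarith
      · have hterm : ∀ j : Fin d, min 1 (max (w j - (γstar - ε)) 0)
            ≤ min 1 (max (w j - γstar) 0) + ε := by
          intro j
          have := fantope_clamp_lip (w j - γstar) ε hεpos.le
          calc min 1 (max (w j - (γstar - ε)) 0)
              = min 1 (max (w j - γstar + ε) 0) := by ring_nf
            _ ≤ min 1 (max (w j - γstar) 0) + ε := this
        calc f (γstar - ε) ≤ ∑ j, (min 1 (max (w j - γstar) 0) + ε) :=
              Finset.sum_le_sum fun j _ => hterm j
          _ = f γstar + d * ε := by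
              rw [Finset.sum_add_distrib]
              simp [hf, Finset.card_univ, mul_comm]
          _ ≤ f γstar + d * (((K : ℝ) - f γstar) / d) := by nlinarith
          _ = (K : ℝ) := by field_simp; ring
    have hc := csInf_le hSbdd hmem
    rw [← hγ] at hc
    linarith
  -- bounds on h
  have hh0 : ∀ j, 0 ≤ h j := fun j =>
    le_min zero_le_one (le_max_right _ _)
  have hh1 : ∀ j, h j ≤ 1 := fun j => min_le_left _ _
  -- matrix machinery
  have hUUT : U * Uᴴ = 1 := by
    ext i j
    simp only [Matrix.mul_apply, Matrix.conjTranspose_apply, Matrix.of_apply, star_trivial,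
      Matrix.one_apply, hU]
    simpa [dotProduct] using horth i j
  have hUTU : Uᴴ * U = 1 := mul_eq_one_comm.mp hUUT
  have hWd : W = Uᴴ * Matrix.diagonal w * U := by rw [hW, fantope_decomp]
  have hHd : Hstar = Uᴴ * Matrix.diagonal h * U := by rw [hH, fantope_decomp]
  -- PSD facts
  have hHpsd : Hstar.PosSemidef := by
    rw [hHd]
    exact (Matrix.posSemidef_diagonal_iff.mpr hh0).conjTranspose_mul_mul_same U
  have hOneSub : (1 - Hstar).PosSemidef := by
    have hdd : Matrix.diagonal (fun j => 1 - h j)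
        = (1 : Matrix (Fin d) (Fin d) ℝ) - Matrix.diagonal h := by
      ext a b; by_cases hab : a = b <;> simp [Matrix.diagonal_apply, Matrix.one_apply, hab]
    have : (1 : Matrix (Fin d) (Fin d) ℝ) - Hstar
        = Uᴴ * Matrix.diagonal (fun j => 1 - h j) * U := by
      rw [hdd, mul_sub, sub_mul, mul_one, hUTU, ← hHd]
    rw [this]
    exact (Matrix.posSemidef_diagonal_iff.mpr fun j => by linarith [hh1 j]).conjTranspose_mul_mul_same U
  have htraceH : Hstar.trace = ∑ j, h j := by
    rw [hHd, Matrix.trace_mul_cycle, hUUT, one_mul, Matrix.trace_diagonal]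
  have htrace : Hstar.trace ≤ (K : ℝ) := by rw [htraceH]; exact hfeas
  refine ⟨hHpsd, hOneSub, htrace, ?_⟩
  -- minimality
  intro H hHp h1Hp htrH
  set G : Matrix (Fin d) (Fin d) ℝ := U * H * Uᴴ with hG
  have hHrec : H = Uᴴ * G * U := by
    rw [hG]
    calc H = 1 * H * 1 := by rw [one_mul, mul_one]
      _ = (Uᴴ * U) * H * (Uᴴ * U) := by rw [hUTU]
      _ = Uᴴ * (U * H * Uᴴ) * U := by simp only [Matrix.mul_assoc]
  have hGpsd : G.PosSemidef := hHp.mul_mul_conjTranspose_same U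
  have hG1psd : ((1 : Matrix (Fin d) (Fin d) ℝ) - G).PosSemidef := by
    have : (1 : Matrix (Fin d) (Fin d) ℝ) - G = U * (1 - H) * Uᴴ := by
      rw [Matrix.mul_sub, Matrix.sub_mul, mul_one, hUUT, hG]
    rw [this]
    exact h1Hp.mul_mul_conjTranspose_same U
  have hGdiag0 : ∀ a, 0 ≤ G a a := fantope_diag_nonneg hGpsd
  have hGdiag1 : ∀ a, G a a ≤ 1 := by
    intro a
    have := fantope_diag_nonneg hG1psd a
    have h1 : ((1 : Matrix (Fin d) (Fin d) ℝ) - G) a a = 1 - G a a := by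
      simp [Matrix.sub_apply, Matrix.one_apply]
    linarith [h1 ▸ this]
  have hGtr : ∑ a, G a a ≤ (K : ℝ) := by
    have : G.trace = H.trace := by
      rw [hG, Matrix.trace_mul_cycle, hUTU, one_mul]
    calc ∑ a, G a a = G.trace := rfl
      _ = H.trace := this
      _ ≤ (K : ℝ) := htrH
  -- frobenius computation
  have hdsub : Matrix.diagonal (fun j => h j - w j)
      = Matrix.diagonal h - Matrix.diagonal w := by
    ext a b; by_cases hab : a = b <;> simp [Matrix.diagonal_apply, hab]
  have hHW : Hstar - W = Uᴴ * Matrix.diagonal (fun j => h j - w j) * U := by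
    rw [hdsub, mul_sub, sub_mul, ← hHd, ← hWd]
  have hfs1 : ∑ a, ∑ b, ((Hstar - W) a b) ^ 2 = ∑ j, (h j - w j) ^ 2 := by
    rw [hHW, fantope_fsq_conj U _ hUUT, fantope_fsq_diagonal]
  have hHW2 : H - W = Uᴴ * (G - Matrix.diagonal w) * U := by
    rw [mul_sub, sub_mul, ← hHrec, ← hWd]
  have hfs2 : ∑ a, ∑ b, ((H - W) a b) ^ 2
      = ∑ a, ∑ b, ((G - Matrix.diagonal w) a b) ^ 2 := by
    rw [hHW2, fantope_fsq_conj U _ hUUT]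
  have hdiaglb : ∑ a, (G a a - w a) ^ 2 ≤ ∑ a, ∑ b, ((G - Matrix.diagonal w) a b) ^ 2 := by
    apply Finset.sum_le_sum
    intro a _
    have : (G a a - w a) ^ 2 = ((G - Matrix.diagonal w) a a) ^ 2 := by
      simp [Matrix.sub_apply, Matrix.diagonal_apply]
    rw [this]
    exact Finset.single_le_sum (f := fun b => ((G - Matrix.diagonal w) a b) ^ 2)
      (fun b _ => sq_nonneg _) (Finset.mem_univ a)
  have hvec : ∑ j, (h j - w j) ^ 2 ≤ ∑ a, (G a a - w a) ^ 2 := by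
    exact fantope_vec (K : ℝ) w γstar hγ0 hcomp (fun a => G a a) hGdiag0 hGdiag1 hGtr
  unfold frobNorm
  apply Real.sqrt_le_sqrt
  rw [hfs1, hfs2]
  linarith
end

section
/- Let m ≥ 1 and for each i ∈ [m] let a^{(i)}_1, …, a^{(i)}_{n_i} ∈ ℝ^d be a finite sequence of vectors satisfying Σ_{k=2}^{n_i} ‖a^{(i)}_k − a^{(i)}_{k−1}‖_∞ ≤ δ, and let N = Σ_{i=1}^m n_i. Then for all coordinates j, l ∈ [d]: | (1/N) Σ_{i=1}^m Σ_{k=1}^{⌊n_i/2⌋} (a^{(i)}_{2k, j} − a^{(i)}_{2k−1, j}) (a^{(i)}_{2k, l} − a^{(i)}_{2k−1, l}) | ≤ m δ² / N. -/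
open BigOperators

theorem coord_sum_le (m d : ℕ) (n : Fin m → ℕ) (δ : ℝ)
    (a : Fin m → ℕ → Fin d → ℝ)
    (ha : ∀ i, ∑ k ∈ Finset.Icc 2 (n i), ‖a i k - a i (k - 1)‖ ≤ δ)
    (i : Fin m) (j : Fin d) :
    ∑ k ∈ Finset.Icc 1 (n i / 2), |a i (2 * k) j - a i (2 * k - 1) j| ≤ δ := by
  refine le_trans ?_ (ha i)
  have h1 : ∀ k ∈ Finset.Icc 1 (n i / 2),
      |a i (2 * k) j - a i (2 * k - 1) j| ≤ ‖a i (2 * k) - a i (2 * k - 1)‖ := by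
    intro k _
    have := norm_le_pi_norm (a i (2 * k) - a i (2 * k - 1)) j
    simpa using this
  refine le_trans (Finset.sum_le_sum h1) ?_
  have him : ∑ k ∈ Finset.Icc 1 (n i / 2), ‖a i (2 * k) - a i (2 * k - 1)‖
      = ∑ k ∈ (Finset.Icc 1 (n i / 2)).image (fun k => 2 * k),
          ‖a i k - a i (k - 1)‖ := by
    rw [Finset.sum_image]
    intro x _ y _ h; dsimp only at h; omega
  rw [him]
  refine Finset.sum_le_sum_of_subset_of_nonneg ?_ (fun k _ _ => norm_nonneg _)
  intro x hx
  simp only [Finset.mem_image, Finset.mem_Icc] at hx ⊢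
  obtain ⟨k, ⟨hk1, hk2⟩, rfl⟩ := hx
  omega

/-- The deterministic bound on the term `M₁` in the proof of Lemma 2: if for each client
`i` the vectors `a^{(i)}_1, …, a^{(i)}_{n_i}` have total variation (in the sup norm) at
most `δ`, then the averaged paired-difference cross products are bounded by `m δ² / N`.
Here `‖·‖` on `Fin d → ℝ` is the sup norm. -/
theorem paired_difference_bound (m d : ℕ) (hm : 1 ≤ m) (n : Fin m → ℕ) (δ : ℝ)
    (a : Fin m → ℕ → Fin d → ℝ)
    (ha : ∀ i, ∑ k ∈ Finset.Icc 2 (n i), ‖a i k - a i (k - 1)‖ ≤ δ)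
    (N : ℕ) (hN : N = ∑ i, n i) :
    ∀ j l : Fin d,
      |(1 / (N : ℝ)) * ∑ i, ∑ k ∈ Finset.Icc 1 (n i / 2),
          (a i (2 * k) j - a i (2 * k - 1) j) * (a i (2 * k) l - a i (2 * k - 1) l)|
        ≤ (m : ℝ) * δ ^ 2 / N := by
  intro j l
  have hδ : 0 ≤ δ :=
    le_trans (Finset.sum_nonneg fun k _ => norm_nonneg _) (ha ⟨0, hm⟩)
  have hi : ∀ i : Fin m,
      |∑ k ∈ Finset.Icc 1 (n i / 2),
          (a i (2 * k) j - a i (2 * k - 1) j) * (a i (2 * k) l - a i (2 * k - 1) l)|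
        ≤ δ ^ 2 := by
    intro i
    refine le_trans (Finset.abs_sum_le_sum_abs _ _) ?_
    have hstep : ∀ k ∈ Finset.Icc 1 (n i / 2),
        |(a i (2 * k) j - a i (2 * k - 1) j) * (a i (2 * k) l - a i (2 * k - 1) l)|
          ≤ |a i (2 * k) j - a i (2 * k - 1) j| * δ := by
      intro k hk
      rw [abs_mul]
      refine mul_le_mul_of_nonneg_left ?_ (abs_nonneg _)
      refine le_trans ?_ (coord_sum_le m d n δ a ha i l)
      exact Finset.single_le_sum (f := fun k => |a i (2 * k) l - a i (2 * k - 1) l|)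
        (fun k _ => abs_nonneg _) hk
    refine le_trans (Finset.sum_le_sum hstep) ?_
    rw [← Finset.sum_mul, sq]
    exact mul_le_mul_of_nonneg_right (coord_sum_le m d n δ a ha i j) hδ
  have hS : |∑ i, ∑ k ∈ Finset.Icc 1 (n i / 2),
      (a i (2 * k) j - a i (2 * k - 1) j) * (a i (2 * k) l - a i (2 * k - 1) l)|
        ≤ (m : ℝ) * δ ^ 2 := by
    refine le_trans (Finset.abs_sum_le_sum_abs _ _) ?_
    calc ∑ i, |∑ k ∈ Finset.Icc 1 (n i / 2),
        (a i (2 * k) j - a i (2 * k - 1) j) * (a i (2 * k) l - a i (2 * k - 1) l)|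
        ≤ ∑ _i : Fin m, δ ^ 2 := Finset.sum_le_sum fun i _ => hi i
      _ = (m : ℝ) * δ ^ 2 := by simp [mul_comm]
  rw [abs_mul, abs_of_nonneg (by positivity : (0:ℝ) ≤ 1 / (N:ℝ)), one_div, mul_comm ((N:ℝ))⁻¹, div_eq_mul_inv]
  exact mul_le_mul_of_nonneg_right hS (by positivity)
end

section
/- Let K̂₁, …, K̂_m be independent ℕ-valued random variables on a probability space with P(K̂_i ≠ K) ≤ γ for every i ∈ [m], where K ∈ ℕ and 0 ≤ γ ≤ 1. Let K̂ be any random variable such that almost surely K̂ is a mode of the sample (K̂₁, …, K̂_m), i.e. #{i : K̂_i = K̂} ≥ #{i : K̂_i = k} for every k ∈ ℕ. Then P(K̂ ≠ K) ≤ (2 √γ)^m. -/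
open MeasureTheory ProbabilityTheory

/-- Corollary 1 (abstract form): if `K̂₁, …, K̂_m` are independent ℕ-valued estimates,
each wrong with probability at most `γ`, and `K̂` is almost surely a mode of the sample
`(K̂₁, …, K̂_m)`, then `P(K̂ ≠ K) ≤ (2√γ)^m`. -/
theorem mode_of_independent_estimates_bound {Ω : Type*} [MeasurableSpace Ω]
    (μ : Measure Ω) [IsProbabilityMeasure μ] (m : ℕ) (hm : 1 ≤ m)
    (Khat : Fin m → Ω → ℕ) (hmeas : ∀ i, Measurable (Khat i))
    (hindep : iIndepFun Khat μ)
    (K : ℕ) (γ : ℝ) (hγ0 : 0 ≤ γ) (hγ1 : γ ≤ 1)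
    (herr : ∀ i, μ {ω | Khat i ω ≠ K} ≤ ENNReal.ofReal γ)
    (Kmode : Ω → ℕ)
    (hmode : ∀ᵐ ω ∂μ, ∀ k : ℕ,
      Nat.card {i : Fin m // Khat i ω = k} ≤
        Nat.card {i : Fin m // Khat i ω = Kmode ω}) :
    μ {ω | Kmode ω ≠ K} ≤ ENNReal.ofReal ((2 * Real.sqrt γ) ^ m) := by
  classical
  set t := (m + 1) / 2 with ht
  set A : Fin m → Set Ω := fun i => {ω | Khat i ω ≠ K} with hA
  -- a.e. inclusion into the union over subsets of size t of "all wrong" events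
  have hsub : {ω | Kmode ω ≠ K} ≤ᵐ[μ]
      ⋃ S ∈ (Finset.univ : Finset (Fin m)).powersetCard t, ⋂ i ∈ S, A i := by
    filter_upwards [hmode] with ω hω hne
    have hcard : ∀ k : ℕ, Nat.card {i : Fin m // Khat i ω = k} =
        (Finset.univ.filter (fun i => Khat i ω = k)).card := by
      intro k
      rw [Nat.card_eq_fintype_card, Fintype.card_subtype]
    have h1 := hω K
    rw [hcard, hcard] at h1
    have hMW : (Finset.univ.filter (fun i => Khat i ω = Kmode ω)) ⊆
        (Finset.univ.filter (fun i => Khat i ω ≠ K)) := by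
      intro i hi
      simp only [Finset.mem_filter] at hi ⊢
      exact ⟨hi.1, hi.2 ▸ hne⟩
    have h2 := Finset.card_le_card hMW
    have h3 : (Finset.univ.filter (fun i => Khat i ω = K)).card +
        (Finset.univ.filter (fun i => Khat i ω ≠ K)).card = m := by
      rw [Finset.card_filter_add_card_filter_not]
      simp
    have hcount : t ≤ (Finset.univ.filter (fun i => Khat i ω ≠ K)).card := by omega
    obtain ⟨S, hSsub, hScard⟩ := Finset.exists_subset_card_eq hcount
    refine Set.mem_biUnion (Finset.mem_powersetCard.2 ⟨Finset.subset_univ _, hScard⟩) ?_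
    exact Set.mem_biInter fun i hi => (Finset.mem_filter.1 (hSsub hi)).2
  have hmeasγ : ∀ S ∈ (Finset.univ : Finset (Fin m)).powersetCard t,
      μ (⋂ i ∈ S, A i) ≤ ENNReal.ofReal γ ^ t := by
    intro S hS
    have hScard : S.card = t := (Finset.mem_powersetCard.1 hS).2
    have hmb : μ (⋂ i ∈ S, A i) = ∏ i ∈ S, μ (A i) := by
      refine hindep.meas_biInter (fun i _ => ?_)
      exact ⟨({K}ᶜ : Set ℕ), (measurableSet_singleton K).compl, rfl⟩
    rw [hmb]
    calc ∏ i ∈ S, μ (A i) ≤ ∏ _i ∈ S, ENNReal.ofReal γ :=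
          Finset.prod_le_prod' fun i _ => herr i
      _ = ENNReal.ofReal γ ^ t := by rw [Finset.prod_const, hScard]
  calc μ {ω | Kmode ω ≠ K}
      ≤ μ (⋃ S ∈ (Finset.univ : Finset (Fin m)).powersetCard t, ⋂ i ∈ S, A i) :=
        measure_mono_ae hsub
    _ ≤ ∑ S ∈ (Finset.univ : Finset (Fin m)).powersetCard t, μ (⋂ i ∈ S, A i) :=
        measure_biUnion_finset_le _ _
    _ ≤ ∑ _S ∈ (Finset.univ : Finset (Fin m)).powersetCard t, ENNReal.ofReal γ ^ t :=
        Finset.sum_le_sum hmeasγ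
    _ = (m.choose t : ENNReal) * ENNReal.ofReal γ ^ t := by
        rw [Finset.sum_const, Finset.card_powersetCard, Finset.card_univ,
          Fintype.card_fin, nsmul_eq_mul]
    _ ≤ (2 : ENNReal) ^ m * ENNReal.ofReal (Real.sqrt γ) ^ m := by
        refine mul_le_mul' ?_ ?_
        · have hch : m.choose t ≤ 2 ^ m := by
            calc m.choose t ≤ ∑ i ∈ Finset.range (m + 1), m.choose i :=
                  Finset.single_le_sum (fun _ _ => Nat.zero_le _)
                    (Finset.mem_range.2 (by omega))
              _ = 2 ^ m := Nat.sum_range_choose m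
          calc (m.choose t : ENNReal) ≤ ((2 ^ m : ℕ) : ENNReal) := by exact_mod_cast hch
            _ = (2 : ENNReal) ^ m := by push_cast; ring
        · have hγeq : ENNReal.ofReal γ = ENNReal.ofReal (Real.sqrt γ) ^ 2 := by
            rw [← ENNReal.ofReal_pow (Real.sqrt_nonneg γ), Real.sq_sqrt hγ0]
          have hle1 : ENNReal.ofReal (Real.sqrt γ) ≤ 1 := by
            rw [ENNReal.ofReal_le_one]; exact Real.sqrt_le_one.2 hγ1
          rw [hγeq, ← pow_mul]
          exact pow_le_pow_of_le_one (zero_le) hle1 (by omega)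
    _ = ENNReal.ofReal ((2 * Real.sqrt γ) ^ m) := by
        rw [mul_pow, ENNReal.ofReal_mul (by positivity), ENNReal.ofReal_pow (by norm_num),
          ENNReal.ofReal_pow (Real.sqrt_nonneg γ), ENNReal.ofReal_ofNat]
end
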